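/- For every Z > 0 there exist a number λ₀ = λ₀(Z) ≥ 1 and a number C₀ = C₀(Z) > 0, both depending only on Z, such that for every function u : [0,Z] → ℝ that is twice continuously differentiable with u(0) = 0 and u'(0) = 0, and for every λ ≥ λ₀, the following Carleman estimate for the operator d²/dz² holds: ∫₀^Z u''(z)² e^{−2λz} dz ≥ C₀ ∫₀^Z u''(z)² e^{−2λz} dz + C₀ λ ∫₀^Z (u'(z)² + λ² u(z)²) e^{−2λz} dz. -/

import Mathlib

open intervalIntegral Real

lemma carleman_key (lam Z : ℝ) (hlam : 0 ≤ lam) (hZ : 0 ≤ Z) (v : ℝ → ℝ)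
    (hv : ContDiff ℝ 1 v) (hv0 : v 0 = 0) :
    lam ^ 2 * ∫ z in (0:ℝ)..Z, v z ^ 2 * Real.exp (-2 * lam * z) ≤
      ∫ z in (0:ℝ)..Z, (deriv v z) ^ 2 * Real.exp (-2 * lam * z) := by
  have hvc : Continuous v := hv.continuous
  have hdv : Continuous (deriv v) := hv.continuous_deriv le_rfl
  have hE : Continuous fun z : ℝ => Real.exp (-2 * lam * z) := by continuity
  -- derivative of v²·e^{-2λz}
  have hF : ∀ z : ℝ, HasDerivAt (fun z => v z ^ 2 * Real.exp (-2 * lam * z))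
      ((2 * v z * deriv v z - 2 * lam * v z ^ 2) * Real.exp (-2 * lam * z)) z := by
    intro z
    have h1 : HasDerivAt v (deriv v z) z := (hv.differentiable one_ne_zero z).hasDerivAt
    have h2 := h1.fun_pow 2
    have h3 : HasDerivAt (fun z : ℝ => Real.exp (-2 * lam * z))
        (Real.exp (-2 * lam * z) * (-2 * lam * 1)) z :=
      ((hasDerivAt_id z).const_mul (-2 * lam)).exp
    have : HasDerivAt (fun z => v z ^ 2 * Real.exp (-2 * lam * z)) _ z := h2.fun_mul h3
    convert this using 1
    push_cast
    ring
  have hFTC : (∫ z in (0:ℝ)..Z,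
      (2 * v z * deriv v z - 2 * lam * v z ^ 2) * Real.exp (-2 * lam * z))
      = v Z ^ 2 * Real.exp (-2 * lam * Z) - v 0 ^ 2 * Real.exp (-2 * lam * 0) := by
    exact intervalIntegral.integral_eq_sub_of_hasDerivAt (fun z _ => hF z)
      (by apply Continuous.intervalIntegrable; continuity)
  -- pointwise identity
  have hpt : ∀ z : ℝ, (deriv v z) ^ 2 * Real.exp (-2 * lam * z)
      = (deriv v z - lam * v z) ^ 2 * Real.exp (-2 * lam * z)
        + lam * ((2 * v z * deriv v z - 2 * lam * v z ^ 2) * Real.exp (-2 * lam * z))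
        + lam ^ 2 * (v z ^ 2 * Real.exp (-2 * lam * z)) := by
    intro z; ring
  have hI1 : IntervalIntegrable (fun z => (deriv v z - lam * v z) ^ 2 * Real.exp (-2 * lam * z))
      MeasureTheory.volume 0 Z := by apply Continuous.intervalIntegrable; continuity
  have hI2 : IntervalIntegrable
      (fun z => (2 * v z * deriv v z - 2 * lam * v z ^ 2) * Real.exp (-2 * lam * z))
      MeasureTheory.volume 0 Z := by apply Continuous.intervalIntegrable; continuity
  have hI3 : IntervalIntegrable (fun z => v z ^ 2 * Real.exp (-2 * lam * z))
      MeasureTheory.volume 0 Z := by apply Continuous.intervalIntegrable; continuity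
  have hsplit : (∫ z in (0:ℝ)..Z, (deriv v z) ^ 2 * Real.exp (-2 * lam * z))
      = (∫ z in (0:ℝ)..Z, (deriv v z - lam * v z) ^ 2 * Real.exp (-2 * lam * z))
        + lam * (∫ z in (0:ℝ)..Z,
            (2 * v z * deriv v z - 2 * lam * v z ^ 2) * Real.exp (-2 * lam * z))
        + lam ^ 2 * ∫ z in (0:ℝ)..Z, v z ^ 2 * Real.exp (-2 * lam * z) := by
    have step : (∫ z in (0:ℝ)..Z, (deriv v z) ^ 2 * Real.exp (-2 * lam * z))
        = ∫ z in (0:ℝ)..Z, ((deriv v z - lam * v z) ^ 2 * Real.exp (-2 * lam * z)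
          + (lam * ((2 * v z * deriv v z - 2 * lam * v z ^ 2) * Real.exp (-2 * lam * z))
            + lam ^ 2 * (v z ^ 2 * Real.exp (-2 * lam * z)))) :=
      intervalIntegral.integral_congr fun z _ => by rw [hpt z]; ring
    rw [step, intervalIntegral.integral_add hI1 ((hI2.const_mul lam).add (hI3.const_mul (lam ^ 2))),
      intervalIntegral.integral_add (hI2.const_mul lam) (hI3.const_mul (lam ^ 2)),
      intervalIntegral.integral_const_mul, intervalIntegral.integral_const_mul]
    ring
  have h0 : 0 ≤ ∫ z in (0:ℝ)..Z, (deriv v z - lam * v z) ^ 2 * Real.exp (-2 * lam * z) := by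
    apply intervalIntegral.integral_nonneg hZ
    intro z _
    positivity
  have hbd : 0 ≤ lam * (v Z ^ 2 * Real.exp (-2 * lam * Z) - v 0 ^ 2 * Real.exp (-2 * lam * 0)) := by
    rw [hv0]
    have : (0:ℝ) ^ 2 * Real.exp (-2 * lam * 0) = 0 := by ring
    rw [this, sub_zero]
    positivity
  rw [hsplit, hFTC]
  nlinarith [hbd]

/-- Carleman estimate for the operator `d²/dz²` with the Carleman weight
`φ_λ(z) = exp (-2 λ z)` (Theorem 4.1): for every `Z > 0` there exist `λ₀ = λ₀(Z) ≥ 1`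
and `C₀ = C₀(Z) > 0` such that for every twice continuously differentiable `u`
with `u 0 = 0` and `u' 0 = 0`, and every `λ ≥ λ₀`,
`∫₀^Z u''² e^{-2λz} dz ≥ C₀ ∫₀^Z u''² e^{-2λz} dz + C₀ λ ∫₀^Z (u'² + λ² u²) e^{-2λz} dz`. -/
theorem carleman_estimate_second_derivative (Z : ℝ) (hZ : 0 < Z) :
    ∃ lam₀ C₀ : ℝ, 1 ≤ lam₀ ∧ 0 < C₀ ∧
      ∀ u : ℝ → ℝ, ContDiff ℝ 2 u → u 0 = 0 → deriv u 0 = 0 →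
      ∀ lam : ℝ, lam₀ ≤ lam →
      (∫ z in (0:ℝ)..Z, (deriv (deriv u) z) ^ 2 * Real.exp (-2 * lam * z)) ≥
        C₀ * (∫ z in (0:ℝ)..Z, (deriv (deriv u) z) ^ 2 * Real.exp (-2 * lam * z))
        + C₀ * lam *
          ∫ z in (0:ℝ)..Z,
            ((deriv u z) ^ 2 + lam ^ 2 * (u z) ^ 2) * Real.exp (-2 * lam * z) := by
  refine ⟨1, 1/3, le_rfl, by norm_num, ?_⟩
  intro u hu hu0 hu'0 lam hlam
  have hlam0 : (0:ℝ) ≤ lam := le_trans zero_le_one hlam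
  have hu1 : ContDiff ℝ 1 (deriv u) := by
    have h := (contDiff_succ_iff_deriv.mp (by exact_mod_cast hu : ContDiff ℝ (1+1) u)).2.2
    exact h
  have key1 := carleman_key lam Z hlam0 hZ.le (deriv u) hu1 hu'0
  have key2 := carleman_key lam Z hlam0 hZ.le u (hu.of_le (by norm_num)) hu0
  have hvc : Continuous u := hu.continuous
  have hdv : Continuous (deriv u) := hu.continuous_deriv (by norm_num)
  set I1 := ∫ z in (0:ℝ)..Z, (deriv (deriv u) z) ^ 2 * Real.exp (-2 * lam * z) with hI1def
  set I2 := ∫ z in (0:ℝ)..Z, (deriv u z) ^ 2 * Real.exp (-2 * lam * z) with hI2def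
  set I3 := ∫ z in (0:ℝ)..Z, (u z) ^ 2 * Real.exp (-2 * lam * z) with hI3def
  have hi2 : IntervalIntegrable (fun z => (deriv u z) ^ 2 * Real.exp (-2 * lam * z))
      MeasureTheory.volume 0 Z := by apply Continuous.intervalIntegrable; continuity
  have hi3 : IntervalIntegrable (fun z => (u z) ^ 2 * Real.exp (-2 * lam * z))
      MeasureTheory.volume 0 Z := by apply Continuous.intervalIntegrable; continuity
  have hsum : (∫ z in (0:ℝ)..Z,
      ((deriv u z) ^ 2 + lam ^ 2 * (u z) ^ 2) * Real.exp (-2 * lam * z)) = I2 + lam ^ 2 * I3 := by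
    rw [hI2def, hI3def, ← intervalIntegral.integral_const_mul,
      ← intervalIntegral.integral_add hi2 (hi3.const_mul (lam ^ 2))]
    exact intervalIntegral.integral_congr fun z _ => by ring
  rw [hsum]
  have hI2nn : 0 ≤ I2 := intervalIntegral.integral_nonneg hZ.le fun z _ => by positivity
  have hI3nn : 0 ≤ I3 := intervalIntegral.integral_nonneg hZ.le fun z _ => by positivity
  -- key1 : lam^2 * I2 ≤ I1, key2 : lam^2 * I3 ≤ I2
  nlinarith [mul_le_mul_of_nonneg_left key2 hlam0, mul_le_mul_of_nonneg_left key1 hlam0,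
    sq_nonneg lam, mul_nonneg hlam0 hI2nn]
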